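/- Let X be a metric space, x ∈ X, and β : [t₀, t₂] → X a (q, Q)-quasi-geodesic segment connecting z = β(t₂) to w. Let y = β(t₁) be a nearest point on β to x, and let γ : [t₀', t₂] → X be the concatenation of the geodesic segment [x, y] (parametrized by arc length) followed by the quasi-geodesic segment of β from y to z. Then γ is a (3q, Q)-quasi-geodesic; that is, for the endpoints x = γ(t₀') and z = γ(t₂) one has (1/(3q))|t₂ − t₀'| − Q/3 ≤ d(x, z) ≤ q|t₂ − t₀'| + Q, and the analogous inequalities hold for every pair of points along γ. -/

import Mathlib

/-- A `(q,Q)`-quasi-geodesic (as a map) on a set of parameters. -/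
def IsQuasiGeodesicOn {X : Type*} [MetricSpace X] (q Q : ℝ) (f : ℝ → X) (s : Set ℝ) : Prop :=
  ∀ a ∈ s, ∀ b ∈ s, (1 / q) * |a - b| - Q ≤ dist (f a) (f b) ∧ dist (f a) (f b) ≤ q * |a - b| + Q

theorem stmt_2_aux {X : Type*} [MetricSpace X] (q Q : ℝ) (hq : 1 ≤ q) (hQ : 0 ≤ Q)
    (γ : ℝ → X) (t₀' t₁ t₂ : ℝ) (h01 : t₀' ≤ t₁) (h12 : t₁ ≤ t₂)
    (hgeo : ∀ s ∈ Set.Icc t₀' t₁, ∀ s' ∈ Set.Icc t₀' t₁, dist (γ s) (γ s') = |s - s'|)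
    (hqg : IsQuasiGeodesicOn q Q γ (Set.Icc t₁ t₂))
    (hnear : ∀ s ∈ Set.Icc t₁ t₂, dist (γ t₀') (γ t₁) ≤ dist (γ t₀') (γ s)) :
    ∀ a ∈ Set.Icc t₀' t₂, ∀ b ∈ Set.Icc t₀' t₂, a ≤ b →
      (1 / (3 * q)) * |a - b| - Q / 3 ≤ dist (γ a) (γ b) ∧
        dist (γ a) (γ b) ≤ q * |a - b| + Q := by
  intro a ha b hb hab
  have hq0 : (0:ℝ) < q := by linarith
  have habs : |a - b| = b - a := by
    rw [abs_sub_comm]; exact abs_of_nonneg (by linarith)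
  have hinvq : 1 / q ≤ 1 := by
    rw [div_le_one hq0]; exact hq
  have hinvq0 : 0 < 1 / q := by positivity
  have hsplit : (1:ℝ) / (3 * q) = (1 / q) / 3 := by
    field_simp
  rcases le_total b t₁ with hb1 | hb1
  · -- both in the geodesic part
    have hd := hgeo a ⟨ha.1, le_trans hab hb1⟩ b ⟨le_trans ha.1 hab, hb1⟩
    rw [hd, habs]
    constructor
    · have h1 : 1 / (3 * q) * (b - a) ≤ b - a := by
        have : 1 / (3 * q) ≤ 1 := by
          rw [div_le_one (by linarith)]; linarith
        nlinarith
      linarith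
    · nlinarith [mul_le_mul_of_nonneg_right hq (show (0:ℝ) ≤ b - a by linarith)]
  rcases le_total t₁ a with ha1 | ha1
  · -- both in the quasi-geodesic part
    obtain ⟨hl, hu⟩ := hqg a ⟨ha1, ha.2⟩ b ⟨le_trans ha1 hab, hb.2⟩
    refine ⟨?_, hu⟩
    have hd0 : 0 ≤ dist (γ a) (γ b) := dist_nonneg
    rw [hsplit]
    linarith
  · -- mixed case : a ≤ t₁ ≤ b
    have haI : a ∈ Set.Icc t₀' t₁ := ⟨ha.1, ha1⟩
    have hbI : b ∈ Set.Icc t₁ t₂ := ⟨hb1, hb.2⟩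
    have h1I : t₁ ∈ Set.Icc t₀' t₁ := ⟨h01, le_refl _⟩
    have h1I' : t₁ ∈ Set.Icc t₁ t₂ := ⟨le_refl _, h12⟩
    have hda1 : dist (γ a) (γ t₁) = t₁ - a := by
      rw [hgeo a haI t₁ h1I, abs_sub_comm]; exact abs_of_nonneg (by linarith)
    have hd0a : dist (γ t₀') (γ a) = a - t₀' := by
      rw [hgeo t₀' ⟨le_refl _, h01⟩ a haI, abs_sub_comm]; exact abs_of_nonneg (by linarith [ha.1])
    have hd01 : dist (γ t₀') (γ t₁) = t₁ - t₀' := by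
      rw [hgeo t₀' ⟨le_refl _, h01⟩ t₁ h1I, abs_sub_comm]; exact abs_of_nonneg (by linarith)
    obtain ⟨hl1b, hu1b⟩ := hqg t₁ h1I' b hbI
    have habs1 : |t₁ - b| = b - t₁ := by
      rw [abs_sub_comm]; exact abs_of_nonneg (by linarith)
    rw [habs1] at hl1b hu1b
    set D := dist (γ a) (γ b) with hD
    have htri1 : dist (γ t₀') (γ b) ≤ dist (γ t₀') (γ a) + D := dist_triangle _ _ _
    have hnb := hnear b hbI
    -- t₁ - a ≤ D
    have hu1 : t₁ - a ≤ D := by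
      rw [hd01] at hnb; rw [hd0a] at htri1; linarith
    have htri2 : dist (γ t₁) (γ b) ≤ dist (γ t₁) (γ a) + D := dist_triangle _ _ _
    rw [dist_comm (γ t₁) (γ a), hda1] at htri2
    -- (1/q)(b - t₁) - Q ≤ (t₁ - a) + D
    have h2 : 1 / q * (b - t₁) - Q ≤ (t₁ - a) + D := by linarith
    constructor
    · rw [hsplit, habs]
      have hiq : 1 / q * (t₁ - a) ≤ t₁ - a := by
        nlinarith
      have hsum : 1 / q * (b - a) = 1 / q * (t₁ - a) + 1 / q * (b - t₁) := by ring
      linarith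
    · rw [habs]
      have htri3 : D ≤ dist (γ a) (γ t₁) + dist (γ t₁) (γ b) := dist_triangle _ _ _
      rw [hda1] at htri3
      nlinarith [mul_le_mul_of_nonneg_right hq (show (0:ℝ) ≤ t₁ - a by linarith)]

/-- the concatenation `γ` of a geodesic segment `[x,y]`
(parametrized by arc length on `[t₀', t₁]`), where `y = γ t₁` is a nearest point
on the quasi-geodesic part to `x = γ t₀'`, followed by a `(q,Q)`-quasi-geodesic
segment (on `[t₁, t₂]`), is a `(3q, Q)`-quasi-geodesic: for every pair of points
along `γ`, `(1/(3q))|a − b| − Q/3 ≤ d(γ a, γ b) ≤ q|a − b| + Q`. -/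
theorem stmt_2 {X : Type*} [MetricSpace X] (q Q : ℝ) (hq : 1 ≤ q) (hQ : 0 ≤ Q)
    (γ : ℝ → X) (t₀' t₁ t₂ : ℝ) (h01 : t₀' ≤ t₁) (h12 : t₁ ≤ t₂)
    (hgeo : ∀ s ∈ Set.Icc t₀' t₁, ∀ s' ∈ Set.Icc t₀' t₁, dist (γ s) (γ s') = |s - s'|)
    (hqg : IsQuasiGeodesicOn q Q γ (Set.Icc t₁ t₂))
    (hnear : ∀ s ∈ Set.Icc t₁ t₂, dist (γ t₀') (γ t₁) ≤ dist (γ t₀') (γ s)) :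
    ∀ a ∈ Set.Icc t₀' t₂, ∀ b ∈ Set.Icc t₀' t₂,
      (1 / (3 * q)) * |a - b| - Q / 3 ≤ dist (γ a) (γ b) ∧
        dist (γ a) (γ b) ≤ q * |a - b| + Q := by
  intro a ha b hb
  rcases le_total a b with hab | hab
  · exact stmt_2_aux q Q hq hQ γ t₀' t₁ t₂ h01 h12 hgeo hqg hnear a ha b hb hab
  · rw [dist_comm, abs_sub_comm]
    exact stmt_2_aux q Q hq hQ γ t₀' t₁ t₂ h01 h12 hgeo hqg hnear b hb a ha hab
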